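/- Let n > 1 and q > 1 be integers such that C(n-1, k) ≡ (-1)^k (mod q) for every integer k with 0 ≤ k ≤ n-1. Then q is prime and n is a power of q (i.e., n = q^f for some positive integer f). -/

import Mathlib

open Nat

theorem stmt2 (n q : ℕ) (hn : 1 < n) (hq : 1 < q)
    (h : ∀ k ≤ n - 1, (((n - 1).choose k : ℤ)) ≡ (-1) ^ k [ZMOD (q : ℤ)]) :
    q.Prime ∧ ∃ f : ℕ, 0 < f ∧ n = q ^ f := by
  have hn0 : n ≠ 0 := by omega
  have hn1 : n - 1 + 1 = n := by omega
  -- Step A: q divides choose n k for 1 ≤ k < n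
  have hdvdN : ∀ k, 1 ≤ k → k < n → q ∣ n.choose k := by
    intro k hk1 hkn
    obtain ⟨j, rfl⟩ : ∃ j, k = j + 1 := ⟨k - 1, by omega⟩
    have hchoose : n.choose (j + 1) = (n - 1).choose j + (n - 1).choose (j + 1) := by
      conv_lhs => rw [← hn1]
      rw [Nat.choose_succ_succ]
    have h1 := h j (by omega)
    have h2 := h (j + 1) (by omega)
    have hmod : (n.choose (j + 1) : ℤ) ≡ (-1) ^ j + (-1) ^ (j + 1) [ZMOD (q : ℤ)] := by
      rw [hchoose]; push_cast; exact h1.add h2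
    have hz : ((-1 : ℤ)) ^ j + (-1) ^ (j + 1) = 0 := by ring
    rw [hz] at hmod
    have : (q : ℤ) ∣ (n.choose (j + 1) : ℤ) := Int.ModEq.dvd hmod.symm
    exact_mod_cast this
  have hqn : q ∣ n := by
    have := hdvdN 1 le_rfl hn
    rwa [Nat.choose_one_right] at this
  -- the smallest prime factor of q
  set s := q.minFac with hs_def
  have hs : s.Prime := Nat.minFac_prime (by omega)
  haveI : Fact s.Prime := ⟨hs⟩
  have hsq : s ∣ q := Nat.minFac_dvd q
  have hsn : s ∣ n := hsq.trans hqn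
  set v := n.factorization s with hv_def
  have hv : 1 ≤ v := hs.factorization_pos_of_dvd hn0 hsn
  have hordsplit : s ^ v * (n / s ^ v) = n := Nat.ordProj_mul_ordCompl_eq_self n s
  have hmnd : ¬ s ∣ (n / s ^ v) := Nat.not_dvd_ordCompl hs hn0
  have hsvpos : 0 < s ^ v := pow_pos hs.pos v
  -- Step B: n = s ^ v
  have hns : n = s ^ v := by
    by_contra hne
    set m := n / s ^ v with hm_def
    have hm0 : m ≠ 0 := by
      intro h0; rw [h0, mul_zero] at hordsplit; exact hn0 hordsplit.symm
    have hm2 : 2 ≤ m := by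
      rcases Nat.lt_or_ge m 2 with h' | h'
      · interval_cases m
        · exact absurd rfl hm0
        · rw [mul_one] at hordsplit; exact absurd hordsplit.symm hne
      · exact h'
    have hsvlt : s ^ v < n := by
      calc s ^ v < s ^ v * 2 := by omega
        _ ≤ s ^ v * m := Nat.mul_le_mul_left _ hm2
        _ = n := hordsplit
    have hqc : q ∣ n.choose (s ^ v) := hdvdN _ hsvpos hsvlt
    have hsc : s ∣ n.choose (s ^ v) := hsq.trans hqc
    -- Lucas theorem computation
    have lucas := Choose.choose_modEq_choose_mul_prod_range_choose
      (p := s) (n := n) (k := s ^ v) v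
    have hd1 : s ^ v / s ^ v = 1 := Nat.div_self hsvpos
    have hprod : ∀ i ∈ Finset.range v, ((n / s ^ i % s).choose (s ^ v / s ^ i % s) : ℤ) = 1 := by
      intro i hi
      rw [Finset.mem_range] at hi
      have hdiv : s ^ v / s ^ i = s ^ (v - i) := Nat.pow_div (le_of_lt hi) hs.pos
      have hdvd : s ∣ s ^ (v - i) := dvd_pow_self s (by omega)
      have h0 : s ^ (v - i) % s = 0 := by
        obtain ⟨c, hc⟩ := hdvd; simp [hc, Nat.mul_mod_right]
      rw [hdiv, h0, Nat.choose_zero_right, Nat.cast_one]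
    have lucas' : (n.choose (s ^ v) : ℤ) ≡ (m : ℤ) [ZMOD (s : ℤ)] := by
      have hre : (((n / s ^ v).choose (s ^ v / s ^ v) : ℤ)) *
          ((∏ i ∈ Finset.range v, (n / s ^ i % s).choose (s ^ v / s ^ i % s) : ℕ) : ℤ) = (m : ℤ) := by
        push_cast
        rw [hd1, Nat.choose_one_right, Finset.prod_eq_one hprod, mul_one]
      calc (n.choose (s ^ v) : ℤ) ≡ _ [ZMOD (s : ℤ)] := lucas
        _ = (m : ℤ) := hre
    have hsm : s ∣ m := by
      have h0 : (n.choose (s ^ v) : ℤ) ≡ 0 [ZMOD (s : ℤ)] :=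
        (Int.modEq_zero_iff_dvd).mpr (by exact_mod_cast hsc)
      have : (m : ℤ) ≡ 0 [ZMOD (s : ℤ)] := lucas'.symm.trans h0
      exact_mod_cast Int.modEq_zero_iff_dvd.mp this
    exact hmnd hsm
  -- Step C: q = s
  obtain ⟨j, hjv, hqj⟩ := (Nat.dvd_prime_pow hs).mp (hns ▸ hqn)
  have hj1 : 1 ≤ j := by
    rcases Nat.eq_zero_or_pos j with h0 | h'
    · rw [h0, pow_zero] at hqj; omega
    · exact h'
  have hklt : s ^ (v - 1) < s ^ v := Nat.pow_lt_pow_right hs.one_lt (by omega)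
  have hqc : q ∣ (s ^ v).choose (s ^ (v - 1)) := by
    have := hdvdN (s ^ (v - 1)) (pow_pos hs.pos _) (by rw [hns]; exact hklt)
    rwa [hns] at this
  have emult := Nat.Prime.emultiplicity_choose_prime_pow_add_emultiplicity hs
    (le_of_lt hklt) (pow_pos hs.pos _).ne'
  rw [emultiplicity_pow_self_of_prime hs.prime (v - 1)] at emult
  have hj2 : j = 1 := by
    by_contra hj
    have h2j : s ^ 2 ∣ q := by rw [hqj]; exact pow_dvd_pow s (by omega)
    have h2c : s ^ 2 ∣ (s ^ v).choose (s ^ (v - 1)) := h2j.trans hqc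
    have hle : (2 : ℕ∞) ≤ emultiplicity s ((s ^ v).choose (s ^ (v - 1))) :=
      le_emultiplicity_of_pow_dvd h2c
    have : ((2 + (v - 1) : ℕ) : ℕ∞) ≤ (v : ℕ∞) := by
      push_cast
      calc ((2 : ℕ∞)) + ((v - 1 : ℕ) : ℕ∞) ≤
          emultiplicity s ((s ^ v).choose (s ^ (v - 1))) + ((v - 1 : ℕ) : ℕ∞) :=
            add_le_add_left hle _
        _ = (v : ℕ∞) := emult
    have := Nat.cast_le.mp this
    omega
  rw [hj2, pow_one] at hqj
  refine ⟨hqj ▸ hs, v, hv, by rw [hns, hqj]⟩
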